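/- For a ≠ b real and d ≥ 1, the mean of the product of radial exponentials vanishes: lim_{R→∞} (d/R^d) ∫_0^R e^{2πi(a−b)r} r^{d−1} dr = 0, while for a = b this limit equals 1. Consequently, the classes of the functions x ↦ e^{2πi a‖x‖}, a ∈ ℝ, are orthonormal with respect to the inner product ⟨F, G⟩ = lim_{R→∞} (1/vol(B_R)) ∫_{B_R} F conj(G) dλ on ℝ^d. -/

import Mathlib

open MeasureTheory Filter Classical

private lemma norm_radInt_bound (d : ℕ) (hd : 1 ≤ d) (c : ℝ) (hc : c ≠ 0) (R : ℝ) (hR : 0 ≤ R) :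
    ‖∫ r in (0:ℝ)..R, Complex.exp ((c * Complex.I) * r) * (r:ℂ)^(d-1)‖
      ≤ ((d:ℝ) * R^(d-1) + 1) / |c| := by
  set γ : ℂ := (c : ℂ) * Complex.I with hγdef
  have hγ : γ ≠ 0 := by
    simp [hγdef, Complex.ext_iff, hc]
  have hnγ : ‖γ‖ = |c| := by
    rw [hγdef, norm_mul, Complex.norm_I, mul_one, Complex.norm_real, Real.norm_eq_abs]
  have hcpos : 0 < |c| := abs_pos.2 hc
  have hexp1 : ∀ r : ℝ, ‖Complex.exp (γ * r)‖ = 1 := by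
    intro r
    have : γ * r = ((c * r : ℝ) : ℂ) * Complex.I := by push_cast [hγdef]; ring
    rw [this, Complex.norm_exp_ofReal_mul_I]
  have hu : ∀ x ∈ Set.uIcc (0:ℝ) R,
      HasDerivAt (fun r : ℝ => ((r:ℂ))^(d-1)) (((d-1:ℕ):ℂ) * (x:ℂ)^(d-1-1)) x :=
    fun x _ => (hasDerivAt_pow (d-1) (x:ℂ)).comp_ofReal
  have hv : ∀ x ∈ Set.uIcc (0:ℝ) R,
      HasDerivAt (fun r : ℝ => Complex.exp (γ * r) / γ) (Complex.exp (γ * x)) x := by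
    intro x _
    have := (((Complex.ofRealCLM.hasDerivAt (x := x)).const_mul γ).cexp).div_const γ
    convert this using 1
    · rfl
    · rfl
    · simp [hγ]
  have hiu' : IntervalIntegrable (fun x : ℝ => ((d-1:ℕ):ℂ) * (x:ℂ)^(d-1-1)) volume 0 R :=
    (continuous_const.mul (Complex.continuous_ofReal.pow _)).intervalIntegrable _ _
  have hiv' : IntervalIntegrable (fun x : ℝ => Complex.exp (γ * x)) volume 0 R :=
    (Complex.continuous_exp.comp (continuous_const.mul Complex.continuous_ofReal)).intervalIntegrable _ _
  have hcomm : (∫ r in (0:ℝ)..R, Complex.exp (γ * r) * (r:ℂ)^(d-1))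
      = ∫ r in (0:ℝ)..R, (r:ℂ)^(d-1) * Complex.exp (γ * r) :=
    intervalIntegral.integral_congr fun x _ => mul_comm _ _
  have hibp := intervalIntegral.integral_mul_deriv_eq_deriv_mul hu hv hiu' hiv'
  have heq : (∫ r in (0:ℝ)..R, Complex.exp ((c * Complex.I) * r) * (r:ℂ)^(d-1))
      = (R:ℂ)^(d-1) * (Complex.exp (γ * R) / γ) - ((0:ℝ):ℂ)^(d-1) * (Complex.exp (γ * (0:ℝ)) / γ)
        - ∫ r in (0:ℝ)..R, (((d-1:ℕ):ℂ) * (r:ℂ)^(d-1-1)) * (Complex.exp (γ * r) / γ) := by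
    rw [← hγdef, hcomm, hibp]
  rw [heq]
  have hA : ‖(R:ℂ)^(d-1) * (Complex.exp (γ * R) / γ)‖ = R^(d-1) / |c| := by
    rw [norm_mul, norm_div, hexp1, hnγ, norm_pow, Complex.norm_real, Real.norm_eq_abs,
      abs_of_nonneg hR, one_div, div_eq_mul_inv]
  have hB : ‖((0:ℝ):ℂ)^(d-1) * (Complex.exp (γ * (0:ℝ)) / γ)‖ ≤ 1 / |c| := by
    rw [norm_mul, norm_div, hexp1, hnγ, norm_pow, Complex.norm_real, Real.norm_eq_abs, abs_zero]
    rcases Nat.eq_zero_or_pos (d-1) with h | h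
    · simp [h]
    · rw [zero_pow h.ne']
      simp

  have hC : ‖∫ r in (0:ℝ)..R, (((d-1:ℕ):ℂ) * (r:ℂ)^(d-1-1)) * (Complex.exp (γ * r) / γ)‖
      ≤ ((d-1:ℕ):ℝ) * R^(d-1-1) / |c| * R := by
    have := intervalIntegral.norm_integral_le_of_norm_le_const
      (a := (0:ℝ)) (b := R) (C := ((d-1:ℕ):ℝ) * R^(d-1-1) / |c|)
      (f := fun r => (((d-1:ℕ):ℂ) * (r:ℂ)^(d-1-1)) * (Complex.exp (γ * r) / γ)) ?_
    · simpa [abs_of_nonneg hR] using this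
    · intro x hx
      rw [Set.uIoc_of_le hR] at hx
      have hx0 : 0 ≤ x := le_of_lt hx.1
      rw [norm_mul, norm_mul, norm_div, hexp1, hnγ, norm_pow, Complex.norm_real,
        Real.norm_eq_abs, abs_of_nonneg hx0, Complex.norm_natCast]
      have hxR : x ^ (d-1-1) ≤ R ^ (d-1-1) := pow_le_pow_left₀ hx0 hx.2 _
      rw [mul_one_div, div_le_div_iff₀ hcpos hcpos]
      have : (0:ℝ) ≤ ((d-1:ℕ):ℝ) := by positivity
      nlinarith [hxR, hcpos.le, mul_le_mul_of_nonneg_left hxR this]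
  have hC2 : ((d-1:ℕ):ℝ) * R^(d-1-1) / |c| * R ≤ ((d:ℝ) - 1) * R^(d-1) / |c| := by
    rcases Nat.lt_or_ge d 2 with h2 | h2
    · interval_cases d
      simp
    · have hcast : ((d-1:ℕ):ℝ) = (d:ℝ) - 1 := by
        have : (1:ℕ) ≤ d := by omega
        push_cast [this]; ring
      have hpow : R^(d-1-1) * R = R^(d-1) := by
        rw [← pow_succ]; congr 1; omega
      rw [hcast, div_mul_eq_mul_div, mul_assoc, hpow]
  have hd1 : ((d:ℝ) - 1) * R^(d-1) ≤ (d:ℝ) * R^(d-1) - 0 := by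
    have : (0:ℝ) ≤ R^(d-1) := by positivity
    nlinarith
  calc ‖(R:ℂ)^(d-1) * (Complex.exp (γ * R) / γ) - ((0:ℝ):ℂ)^(d-1) * (Complex.exp (γ * (0:ℝ)) / γ)
        - ∫ r in (0:ℝ)..R, (((d-1:ℕ):ℂ) * (r:ℂ)^(d-1-1)) * (Complex.exp (γ * r) / γ)‖
      ≤ ‖(R:ℂ)^(d-1) * (Complex.exp (γ * R) / γ) - ((0:ℝ):ℂ)^(d-1) * (Complex.exp (γ * (0:ℝ)) / γ)‖
        + ‖∫ r in (0:ℝ)..R, (((d-1:ℕ):ℂ) * (r:ℂ)^(d-1-1)) * (Complex.exp (γ * r) / γ)‖ :=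
        norm_sub_le _ _
    _ ≤ (‖(R:ℂ)^(d-1) * (Complex.exp (γ * R) / γ)‖
        + ‖((0:ℝ):ℂ)^(d-1) * (Complex.exp (γ * (0:ℝ)) / γ)‖)
        + ‖∫ r in (0:ℝ)..R, (((d-1:ℕ):ℂ) * (r:ℂ)^(d-1-1)) * (Complex.exp (γ * r) / γ)‖ := by
        gcongr; exact norm_sub_le _ _
    _ ≤ (R^(d-1) / |c| + 1 / |c|) + ((d:ℝ) - 1) * R^(d-1) / |c| := by
        rw [hA]; gcongr
        exact le_trans hC hC2
    _ ≤ ((d:ℝ) * R^(d-1) + 1) / |c| := by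
        rw [← add_div, ← add_div, div_le_div_iff₀ hcpos hcpos]
        have : (0:ℝ) ≤ R^(d-1) := by positivity
        nlinarith

private lemma radInt_tendsto_zero (d : ℕ) (hd : 1 ≤ d) (c : ℝ) (hc : c ≠ 0) :
    Tendsto (fun R : ℝ => (((d : ℝ) / R ^ d : ℝ) : ℂ) *
      ∫ r in (0:ℝ)..R, Complex.exp ((c * Complex.I) * r) * (r:ℂ)^(d-1)) atTop (nhds 0) := by
  have hcpos : 0 < |c| := abs_pos.2 hc
  apply squeeze_zero_norm' (a := fun R : ℝ => ((d:ℝ) * ((d:ℝ) + 1) / |c|) / R)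
  · filter_upwards [eventually_ge_atTop (1:ℝ)] with R hR1
    have hR0 : (0:ℝ) < R := lt_of_lt_of_le one_pos hR1
    have hRd : (0:ℝ) < R ^ d := pow_pos hR0 d
    have hd0 : (0:ℝ) < d := by exact_mod_cast hd
    rw [norm_mul, Complex.norm_real, Real.norm_eq_abs,
      abs_of_nonneg (by positivity : (0:ℝ) ≤ (d:ℝ)/R^d)]
    have hb := norm_radInt_bound d hd c hc R hR0.le
    calc (d:ℝ)/R^d * ‖∫ r in (0:ℝ)..R, Complex.exp ((c * Complex.I) * r) * (r:ℂ)^(d-1)‖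
        ≤ (d:ℝ)/R^d * (((d:ℝ) * R^(d-1) + 1) / |c|) := by gcongr
      _ ≤ ((d:ℝ) * ((d:ℝ) + 1) / |c|) / R := by
          rw [div_mul_div_comm, div_div, div_le_div_iff₀ (by positivity) (by positivity)]
          have hpow : R ^ (d-1) * R = R ^ d := by
            rw [← pow_succ]; congr 1; omega
          have hRR : R ≤ R ^ d := le_self_pow₀ hR1 (by omega)
          have key : (d:ℝ) * ((d:ℝ)*R^(d-1)+1) * R ≤ (d:ℝ)*((d:ℝ)+1) * R^d := by
            have e1 : (d:ℝ)*((d:ℝ)*R^(d-1)+1)*R = (d:ℝ)*(d:ℝ)*(R^(d-1)*R) + (d:ℝ)*R := by ring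
            rw [e1, hpow]
            nlinarith [mul_le_mul_of_nonneg_left hRR hd0.le]
          nlinarith [mul_le_mul_of_nonneg_left key hcpos.le]
  · have : Tendsto (fun R : ℝ => ((d:ℝ) * ((d:ℝ) + 1) / |c|) / R) atTop (nhds 0) :=
      tendsto_const_nhds.div_atTop tendsto_id
    exact this

set_option maxHeartbeats 1000000 in
theorem radial_exponentials_orthonormal (d : ℕ) (hd : 1 ≤ d) (a b : ℝ) :
    Tendsto (fun R : ℝ =>
        (((d : ℝ) / R ^ d : ℝ) : ℂ) *
          ∫ r in (0:ℝ)..R,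
            Complex.exp (2 * Real.pi * Complex.I * (((a - b) * r : ℝ) : ℂ)) *
              ((r : ℂ) ^ (d - 1)))
      atTop (nhds (if a = b then 1 else 0)) ∧
    Tendsto (fun R : ℝ =>
        ((((volume (Metric.ball (0 : EuclideanSpace ℝ (Fin d)) R)).toReal)⁻¹ : ℝ) : ℂ) *
          ∫ x in Metric.ball (0 : EuclideanSpace ℝ (Fin d)) R,
            Complex.exp (2 * Real.pi * Complex.I * ((a * ‖x‖ : ℝ) : ℂ)) *
              (starRingEnd ℂ)
                (Complex.exp (2 * Real.pi * Complex.I * ((b * ‖x‖ : ℝ) : ℂ))))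
      atTop (nhds (if a = b then 1 else 0)) := by
  haveI : Nonempty (Fin d) := ⟨⟨0, hd⟩⟩
  have hdne : (d:ℝ) ≠ 0 := by positivity
  -- Part 1
  have h1 : Tendsto (fun R : ℝ =>
        (((d : ℝ) / R ^ d : ℝ) : ℂ) *
          ∫ r in (0:ℝ)..R,
            Complex.exp (2 * Real.pi * Complex.I * (((a - b) * r : ℝ) : ℂ)) *
              ((r : ℂ) ^ (d - 1)))
      atTop (nhds (if a = b then 1 else 0)) := by
    by_cases hab : a = b
    · rw [if_pos hab]
      apply Tendsto.congr' _ tendsto_const_nhds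
      filter_upwards [eventually_gt_atTop (0:ℝ)] with R hR
      have hint : (∫ r in (0:ℝ)..R,
          Complex.exp (2 * Real.pi * Complex.I * (((a - b) * r : ℝ) : ℂ)) * ((r : ℂ) ^ (d - 1)))
          = ((R^d / d : ℝ) : ℂ) := by
        have : ∀ r : ℝ, Complex.exp (2 * Real.pi * Complex.I * (((a - b) * r : ℝ) : ℂ))
            * ((r : ℂ) ^ (d - 1)) = ((r ^ (d-1) : ℝ) : ℂ) := by
          intro r
          rw [hab]
          push_cast
          simp
        have hd1 : d - 1 + 1 = d := by omega
        rw [intervalIntegral.integral_congr (fun x _ => this x),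
          intervalIntegral.integral_ofReal, integral_pow, hd1]
        congr 1
        rw [zero_pow (by omega : d ≠ 0), sub_zero]
        congr 1
        rw [Nat.cast_sub hd]
        push_cast
        ring
      rw [hint]
      have hRd : R ^ d ≠ 0 := by positivity
      rw [← Complex.ofReal_mul, ← Complex.ofReal_one]
      congr 1
      field_simp
    · rw [if_neg hab]
      have hc : 2 * Real.pi * (a - b) ≠ 0 := by
        have := Real.pi_ne_zero
        have hab' : a - b ≠ 0 := sub_ne_zero.2 hab
        positivity
      have := radInt_tendsto_zero d hd (2 * Real.pi * (a - b)) hc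
      refine this.congr fun R => ?_
      refine congrArg _ ?_
      apply intervalIntegral.integral_congr
      intro x _
      have harg : ((2 * Real.pi * (a - b) : ℝ) : ℂ) * Complex.I * (x : ℂ)
          = 2 * Real.pi * Complex.I * (((a - b) * x : ℝ) : ℂ) := by
        push_cast
        ring
      simp only [harg]
  refine ⟨h1, h1.congr' ?_⟩
  -- Part 2 : reduce to part 1
  haveI : Nontrivial (EuclideanSpace ℝ (Fin d)) := inferInstance
  have hdim : Module.finrank ℝ (EuclideanSpace ℝ (Fin d)) = d := by
    simp [finrank_euclideanSpace]
  set E := EuclideanSpace ℝ (Fin d)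
  set V := (volume (Metric.ball (0 : E) 1)).toReal with hVdef
  have hVpos : 0 < V := by
    rw [hVdef]
    exact ENNReal.toReal_pos (Metric.measure_ball_pos volume 0 one_pos).ne'
      measure_ball_lt_top.ne
  set g : ℝ → ℂ := fun r => Complex.exp (2 * Real.pi * Complex.I * (((a - b) * r : ℝ) : ℂ))
    with hgdef
  have hgcont : Continuous g := by
    apply Complex.continuous_exp.comp
    exact continuous_const.mul (Complex.continuous_ofReal.comp (continuous_const.mul continuous_id))
  filter_upwards [eventually_gt_atTop (0:ℝ)] with R hR
  have hpt : ∀ x : E, Complex.exp (2 * Real.pi * Complex.I * ((a * ‖x‖ : ℝ) : ℂ)) *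
      (starRingEnd ℂ) (Complex.exp (2 * Real.pi * Complex.I * ((b * ‖x‖ : ℝ) : ℂ)))
      = g ‖x‖ := by
    intro x
    rw [hgdef, ← Complex.exp_conj, ← Complex.exp_add]
    congr 1
    simp only [map_mul, Complex.conj_I, Complex.conj_ofReal, map_ofNat]
    push_cast
    ring
  have hball : (∫ x in Metric.ball (0 : E) R,
      Complex.exp (2 * Real.pi * Complex.I * ((a * ‖x‖ : ℝ) : ℂ)) *
        (starRingEnd ℂ) (Complex.exp (2 * Real.pi * Complex.I * ((b * ‖x‖ : ℝ) : ℂ))))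
      = ∫ x : E, Set.indicator (Set.Iio R) g ‖x‖ := by
    rw [← integral_indicator measurableSet_ball]
    apply integral_congr_ae
    filter_upwards with x
    by_cases h : ‖x‖ < R
    · rw [Set.indicator_of_mem (by simpa [mem_ball_zero_iff] using h),
        Set.indicator_of_mem (by simpa using h), hpt x]
    · rw [Set.indicator_of_notMem (by simpa [mem_ball_zero_iff] using h),
        Set.indicator_of_notMem (by simpa using h)]
  have hrad : (∫ x : E, Set.indicator (Set.Iio R) g ‖x‖)
      = (d : ℂ) * ((V : ℂ) * ∫ r in (0:ℝ)..R, g r * (r:ℂ)^(d-1)) := by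
    rw [integral_fun_norm_addHaar volume (Set.indicator (Set.Iio R) g), hdim]
    have hind : ∀ y : ℝ, y ^ (d-1) • Set.indicator (Set.Iio R) g y
        = Set.indicator (Set.Iio R) (fun y : ℝ => y ^ (d-1) • g y) y := by
      intro y
      by_cases h : y ∈ Set.Iio R <;> simp [h]
    rw [integral_congr_ae (Eventually.of_forall fun y => hind y) ,
      setIntegral_indicator measurableSet_Iio, Set.Ioi_inter_Iio,
      Measure.restrict_congr_set Ioo_ae_eq_Ioc, ← intervalIntegral.integral_of_le hR.le]
    have : (∫ r in (0:ℝ)..R, r ^ (d-1) • g r) = ∫ r in (0:ℝ)..R, g r * (r:ℂ)^(d-1) := by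
      apply intervalIntegral.integral_congr
      intro x _
      simp only [Complex.real_smul]
      push_cast
      ring
    rw [this, nsmul_eq_mul, Complex.real_smul]
    rfl
  have hvol : ((volume (Metric.ball (0 : E) R)).toReal) = R ^ d * V := by
    rw [Measure.addHaar_ball volume _ hR.le, hdim, ENNReal.toReal_mul,
      ENNReal.toReal_ofReal (by positivity)]
  rw [hball, hrad, hvol]
  have hI : (∫ r in (0:ℝ)..R,
      Complex.exp (2 * Real.pi * Complex.I * (((a - b) * r : ℝ) : ℂ)) * ((r:ℂ) ^ (d - 1)))
      = ∫ r in (0:ℝ)..R, g r * (r:ℂ) ^ (d - 1) := by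
    apply intervalIntegral.integral_congr
    intro x _
    rw [hgdef]
  rw [hI]
  have hV' : (V:ℂ) ≠ 0 := by exact_mod_cast hVpos.ne'
  have hR' : (R:ℂ) ≠ 0 := by exact_mod_cast hR.ne'
  rw [Complex.ofReal_div, Complex.ofReal_inv, Complex.ofReal_mul, Complex.ofReal_pow,
    Complex.ofReal_natCast]
  field_simp
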